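/- Assume b = e and b ≠ 0 (with a, d ∈ ℝ arbitrary). Let u be a solution of the Longstaff–Schwartz equation on Ω, and let ε ∈ ℝ. Then the function w(x,y,t) = (1 + bε·e^{bt})^{-2(a+d)} · exp( 2b²ε·e^{bt}·(x+y)/(1 + bε·e^{bt}) ) · u( x/(1 + bε·e^{bt}), y/(1 + bε·e^{bt}), t − ln(1 + bε·e^{bt})/b ) satisfies the Longstaff–Schwartz equation at every point (x,y,t) ∈ Ω with 1 + bε·e^{bt} > 0. -/

import Mathlib

/-- Partial derivative in `x`. -/
noncomputable def pdX (u : ℝ → ℝ → ℝ → ℝ) (x y t : ℝ) : ℝ := deriv (fun z => u z y t) x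

/-- Partial derivative in `y`. -/
noncomputable def pdY (u : ℝ → ℝ → ℝ → ℝ) (x y t : ℝ) : ℝ := deriv (fun z => u x z t) y

/-- Partial derivative in `t`. -/
noncomputable def pdT (u : ℝ → ℝ → ℝ → ℝ) (x y t : ℝ) : ℝ := deriv (fun z => u x y z) t

/-- Second partial derivative in `x`. -/
noncomputable def pdXX (u : ℝ → ℝ → ℝ → ℝ) (x y t : ℝ) : ℝ := deriv (fun z => pdX u z y t) x

/-- Second partial derivative in `y`. -/
noncomputable def pdYY (u : ℝ → ℝ → ℝ → ℝ) (x y t : ℝ) : ℝ := deriv (fun z => pdY u x z t) y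

/-- The domain `Ω = {(x,y,t) : x > 0, y > 0}`. -/
def Omega : Set (ℝ × ℝ × ℝ) := {p | 0 < p.1 ∧ 0 < p.2.1}

/-- The Longstaff–Schwartz (Kolmogorov backward) equation
`u_t = −((a−bx)·u_x + (d−ey)·u_y + (x/2)·u_xx + (y/2)·u_yy)` holds at the point `(x,y,t)`. -/
def LSEq (a b d e : ℝ) (u : ℝ → ℝ → ℝ → ℝ) (x y t : ℝ) : Prop :=
  pdT u x y t =
    -((a - b * x) * pdX u x y t + (d - e * y) * pdY u x y t +
      x / 2 * pdXX u x y t + y / 2 * pdYY u x y t)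

/-- `u` is a solution of the Longstaff–Schwartz equation on `Ω`: it is C² on `Ω` and
satisfies the equation at every point of `Ω`. -/
def IsLSSolution (a b d e : ℝ) (u : ℝ → ℝ → ℝ → ℝ) : Prop :=
  ContDiffOn ℝ 2 (fun p : ℝ × ℝ × ℝ => u p.1 p.2.1 p.2.2) Omega ∧
  ∀ x y t : ℝ, 0 < x → 0 < y → LSEq a b d e u x y t

lemma omega_isOpen : IsOpen Omega := by
  have h1 : IsOpen {p : ℝ × ℝ × ℝ | 0 < p.1} := isOpen_lt continuous_const continuous_fst
  have h2 : IsOpen {p : ℝ × ℝ × ℝ | 0 < p.2.1} :=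
    isOpen_lt continuous_const continuous_snd.fst
  exact h1.inter h2

variable {u : ℝ → ℝ → ℝ → ℝ}

lemma hFD (hC : ContDiffOn ℝ 2 (fun p : ℝ × ℝ × ℝ => u p.1 p.2.1 p.2.2) Omega)
    {X Y τ : ℝ} (hX : 0 < X) (hY : 0 < Y) :
    HasFDerivAt (fun p : ℝ × ℝ × ℝ => u p.1 p.2.1 p.2.2)
      (fderiv ℝ (fun p : ℝ × ℝ × ℝ => u p.1 p.2.1 p.2.2) (X, Y, τ)) (X, Y, τ) :=
  ((hC.contDiffAt (omega_isOpen.mem_nhds ⟨hX, hY⟩)).differentiableAt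
    (by norm_num)).hasFDerivAt

lemma hD_X (hC : ContDiffOn ℝ 2 (fun p : ℝ × ℝ × ℝ => u p.1 p.2.1 p.2.2) Omega)
    {X Y τ : ℝ} (hX : 0 < X) (hY : 0 < Y) :
    HasDerivAt (fun z => u z Y τ)
      (fderiv ℝ (fun p : ℝ × ℝ × ℝ => u p.1 p.2.1 p.2.2) (X, Y, τ) (1, 0, 0)) X :=
  (hFD hC hX hY).comp_hasDerivAt (f := fun z : ℝ => ((z, Y, τ) : ℝ × ℝ × ℝ)) X
    ((hasDerivAt_id X).prodMk ((hasDerivAt_const X Y).prodMk (hasDerivAt_const X τ)))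

lemma hD_Y (hC : ContDiffOn ℝ 2 (fun p : ℝ × ℝ × ℝ => u p.1 p.2.1 p.2.2) Omega)
    {X Y τ : ℝ} (hX : 0 < X) (hY : 0 < Y) :
    HasDerivAt (fun z => u X z τ)
      (fderiv ℝ (fun p : ℝ × ℝ × ℝ => u p.1 p.2.1 p.2.2) (X, Y, τ) (0, 1, 0)) Y :=
  (hFD hC hX hY).comp_hasDerivAt (f := fun z : ℝ => ((X, z, τ) : ℝ × ℝ × ℝ)) Y
    ((hasDerivAt_const Y X).prodMk ((hasDerivAt_id Y).prodMk (hasDerivAt_const Y τ)))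

lemma pdX_eq (hC : ContDiffOn ℝ 2 (fun p : ℝ × ℝ × ℝ => u p.1 p.2.1 p.2.2) Omega)
    {X Y τ : ℝ} (hX : 0 < X) (hY : 0 < Y) :
    pdX u X Y τ = fderiv ℝ (fun p : ℝ × ℝ × ℝ => u p.1 p.2.1 p.2.2) (X, Y, τ) (1, 0, 0) :=
  (hD_X hC hX hY).deriv

lemma pdY_eq (hC : ContDiffOn ℝ 2 (fun p : ℝ × ℝ × ℝ => u p.1 p.2.1 p.2.2) Omega)
    {X Y τ : ℝ} (hX : 0 < X) (hY : 0 < Y) :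
    pdY u X Y τ = fderiv ℝ (fun p : ℝ × ℝ × ℝ => u p.1 p.2.1 p.2.2) (X, Y, τ) (0, 1, 0) :=
  (hD_Y hC hX hY).deriv

lemma pdT_eq (hC : ContDiffOn ℝ 2 (fun p : ℝ × ℝ × ℝ => u p.1 p.2.1 p.2.2) Omega)
    {X Y τ : ℝ} (hX : 0 < X) (hY : 0 < Y) :
    pdT u X Y τ = fderiv ℝ (fun p : ℝ × ℝ × ℝ => u p.1 p.2.1 p.2.2) (X, Y, τ) (0, 0, 1) :=
  HasDerivAt.deriv <| (hFD hC hX hY).comp_hasDerivAt (f := fun z : ℝ => ((X, Y, z) : ℝ × ℝ × ℝ)) τ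
    ((hasDerivAt_const τ X).prodMk ((hasDerivAt_const τ Y).prodMk (hasDerivAt_id τ)))

lemma hasDerivAt_uX (hC : ContDiffOn ℝ 2 (fun p : ℝ × ℝ × ℝ => u p.1 p.2.1 p.2.2) Omega)
    {X Y τ : ℝ} (hX : 0 < X) (hY : 0 < Y) :
    HasDerivAt (fun z => u z Y τ) (pdX u X Y τ) X := by
  rw [pdX_eq hC hX hY]; exact hD_X hC hX hY

lemma hasDerivAt_uY (hC : ContDiffOn ℝ 2 (fun p : ℝ × ℝ × ℝ => u p.1 p.2.1 p.2.2) Omega)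
    {X Y τ : ℝ} (hX : 0 < X) (hY : 0 < Y) :
    HasDerivAt (fun z => u X z τ) (pdY u X Y τ) Y := by
  rw [pdY_eq hC hX hY]; exact hD_Y hC hX hY

lemma hasDerivAt_uXX (hC : ContDiffOn ℝ 2 (fun p : ℝ × ℝ × ℝ => u p.1 p.2.1 p.2.2) Omega)
    {X Y τ : ℝ} (hX : 0 < X) (hY : 0 < Y) :
    HasDerivAt (fun z => pdX u z Y τ) (pdXX u X Y τ) X := by
  have hCat : ContDiffAt ℝ 2 (fun p : ℝ × ℝ × ℝ => u p.1 p.2.1 p.2.2) (X, Y, τ) :=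
    hC.contDiffAt (omega_isOpen.mem_nhds ⟨hX, hY⟩)
  have hf1 : ContDiffAt ℝ 1 (fderiv ℝ (fun p : ℝ × ℝ × ℝ => u p.1 p.2.1 p.2.2)) (X, Y, τ) :=
    hCat.fderiv_right (by norm_num)
  have hg : DifferentiableAt ℝ
      (fun p : ℝ × ℝ × ℝ => fderiv ℝ (fun p : ℝ × ℝ × ℝ => u p.1 p.2.1 p.2.2) p
        ((1 : ℝ), (0 : ℝ), (0 : ℝ))) (X, Y, τ) :=
    (hf1.differentiableAt (by norm_num)).clm_apply (differentiableAt_const _)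
  have hline : DifferentiableAt ℝ (fun z : ℝ => ((z, Y, τ) : ℝ × ℝ × ℝ)) X :=
    differentiableAt_id.prodMk ((differentiableAt_const _).prodMk (differentiableAt_const _))
  have hcomp : DifferentiableAt ℝ
      (fun z : ℝ => fderiv ℝ (fun p : ℝ × ℝ × ℝ => u p.1 p.2.1 p.2.2) (z, Y, τ)
        ((1 : ℝ), (0 : ℝ), (0 : ℝ))) X := hg.comp (f := fun z : ℝ => ((z, Y, τ) : ℝ × ℝ × ℝ)) X hline
  have hev : (fun z : ℝ => pdX u z Y τ) =ᶠ[nhds X]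
      (fun z : ℝ => fderiv ℝ (fun p : ℝ × ℝ × ℝ => u p.1 p.2.1 p.2.2) (z, Y, τ)
        ((1 : ℝ), (0 : ℝ), (0 : ℝ))) := by
    filter_upwards [eventually_gt_nhds hX] with z hz
    exact pdX_eq hC hz hY
  exact (hcomp.congr_of_eventuallyEq hev).hasDerivAt

lemma hasDerivAt_uYY (hC : ContDiffOn ℝ 2 (fun p : ℝ × ℝ × ℝ => u p.1 p.2.1 p.2.2) Omega)
    {X Y τ : ℝ} (hX : 0 < X) (hY : 0 < Y) :
    HasDerivAt (fun z => pdY u X z τ) (pdYY u X Y τ) Y := by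
  have hCat : ContDiffAt ℝ 2 (fun p : ℝ × ℝ × ℝ => u p.1 p.2.1 p.2.2) (X, Y, τ) :=
    hC.contDiffAt (omega_isOpen.mem_nhds ⟨hX, hY⟩)
  have hf1 : ContDiffAt ℝ 1 (fderiv ℝ (fun p : ℝ × ℝ × ℝ => u p.1 p.2.1 p.2.2)) (X, Y, τ) :=
    hCat.fderiv_right (by norm_num)
  have hg : DifferentiableAt ℝ
      (fun p : ℝ × ℝ × ℝ => fderiv ℝ (fun p : ℝ × ℝ × ℝ => u p.1 p.2.1 p.2.2) p
        ((0 : ℝ), (1 : ℝ), (0 : ℝ))) (X, Y, τ) :=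
    (hf1.differentiableAt (by norm_num)).clm_apply (differentiableAt_const _)
  have hline : DifferentiableAt ℝ (fun z : ℝ => ((X, z, τ) : ℝ × ℝ × ℝ)) Y :=
    (differentiableAt_const _).prodMk (differentiableAt_id.prodMk (differentiableAt_const _))
  have hcomp : DifferentiableAt ℝ
      (fun z : ℝ => fderiv ℝ (fun p : ℝ × ℝ × ℝ => u p.1 p.2.1 p.2.2) (X, z, τ)
        ((0 : ℝ), (1 : ℝ), (0 : ℝ))) Y := hg.comp (f := fun z : ℝ => ((X, z, τ) : ℝ × ℝ × ℝ)) Y hline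
  have hev : (fun z : ℝ => pdY u X z τ) =ᶠ[nhds Y]
      (fun z : ℝ => fderiv ℝ (fun p : ℝ × ℝ × ℝ => u p.1 p.2.1 p.2.2) (X, z, τ)
        ((0 : ℝ), (1 : ℝ), (0 : ℝ))) := by
    filter_upwards [eventually_gt_nhds hY] with z hz
    exact pdY_eq hC hX hz
  exact (hcomp.congr_of_eventuallyEq hev).hasDerivAt

lemma aux_x (hC : ContDiffOn ℝ 2 (fun p : ℝ × ℝ × ℝ => u p.1 p.2.1 p.2.2) Omega)
    (K c0 A τ y : ℝ) (hA : 0 < A) (hy : 0 < y) :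
    ∀ z : ℝ, 0 < z →
      HasDerivAt (fun z' => K * Real.exp (c0 * (z' + y) / A) * u (z' / A) (y / A) τ)
        (K * (Real.exp (c0 * (z + y) / A) * (c0 / A)) * u (z / A) (y / A) τ +
          K * Real.exp (c0 * (z + y) / A) * (pdX u (z / A) (y / A) τ * (1 / A))) z := by
  intro z hz
  have harg : HasDerivAt (fun z' : ℝ => c0 * (z' + y) / A) (c0 / A) z := by
    simpa using (((hasDerivAt_id z).add_const y).const_mul c0).div_const A
  have hexp : HasDerivAt (fun z' => Real.exp (c0 * (z' + y) / A))
      (Real.exp (c0 * (z + y) / A) * (c0 / A)) z := harg.exp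
  have hdiv : HasDerivAt (fun z' : ℝ => z' / A) (1 / A) z := by
    simpa using (hasDerivAt_id z).div_const A
  have hu1 : HasDerivAt (fun z' => u (z' / A) (y / A) τ)
      (pdX u (z / A) (y / A) τ * (1 / A)) z :=
    (hasDerivAt_uX hC (div_pos hz hA) (div_pos hy hA)).comp (h := fun z' : ℝ => z' / A) z hdiv
  exact (hexp.const_mul K).mul hu1

lemma aux_xx (hC : ContDiffOn ℝ 2 (fun p : ℝ × ℝ × ℝ => u p.1 p.2.1 p.2.2) Omega)
    (K c0 A τ y : ℝ) (hA : 0 < A) (hy : 0 < y) (x : ℝ) (hx : 0 < x) :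
    HasDerivAt (fun z => K * (Real.exp (c0 * (z + y) / A) * (c0 / A)) * u (z / A) (y / A) τ +
          K * Real.exp (c0 * (z + y) / A) * (pdX u (z / A) (y / A) τ * (1 / A)))
      (K * (Real.exp (c0 * (x + y) / A) * (c0 / A) * (c0 / A)) * u (x / A) (y / A) τ +
        K * (Real.exp (c0 * (x + y) / A) * (c0 / A)) * (pdX u (x / A) (y / A) τ * (1 / A)) +
        (K * (Real.exp (c0 * (x + y) / A) * (c0 / A)) * (pdX u (x / A) (y / A) τ * (1 / A)) +
          K * Real.exp (c0 * (x + y) / A) *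
            (pdXX u (x / A) (y / A) τ * (1 / A) * (1 / A)))) x := by
  have harg : HasDerivAt (fun z' : ℝ => c0 * (z' + y) / A) (c0 / A) x := by
    simpa using (((hasDerivAt_id x).add_const y).const_mul c0).div_const A
  have hexp : HasDerivAt (fun z' => Real.exp (c0 * (z' + y) / A))
      (Real.exp (c0 * (x + y) / A) * (c0 / A)) x := harg.exp
  have hdiv : HasDerivAt (fun z' : ℝ => z' / A) (1 / A) x := by
    simpa using (hasDerivAt_id x).div_const A
  have hu1 : HasDerivAt (fun z' => u (z' / A) (y / A) τ)
      (pdX u (x / A) (y / A) τ * (1 / A)) x :=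
    (hasDerivAt_uX hC (div_pos hx hA) (div_pos hy hA)).comp (h := fun z' : ℝ => z' / A) x hdiv
  have hu2 : HasDerivAt (fun z' => pdX u (z' / A) (y / A) τ)
      (pdXX u (x / A) (y / A) τ * (1 / A)) x :=
    (hasDerivAt_uXX hC (div_pos hx hA) (div_pos hy hA)).comp (h := fun z' : ℝ => z' / A) x hdiv
  have h1 := ((hexp.mul_const (c0 / A)).const_mul K).mul hu1
  have h2 := (hexp.const_mul K).mul (hu2.mul_const (1 / A))
  exact h1.add h2

lemma aux_y (hC : ContDiffOn ℝ 2 (fun p : ℝ × ℝ × ℝ => u p.1 p.2.1 p.2.2) Omega)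
    (K c0 A τ x : ℝ) (hA : 0 < A) (hx : 0 < x) :
    ∀ z : ℝ, 0 < z →
      HasDerivAt (fun z' => K * Real.exp (c0 * (x + z') / A) * u (x / A) (z' / A) τ)
        (K * (Real.exp (c0 * (x + z) / A) * (c0 / A)) * u (x / A) (z / A) τ +
          K * Real.exp (c0 * (x + z) / A) * (pdY u (x / A) (z / A) τ * (1 / A))) z := by
  intro z hz
  have harg : HasDerivAt (fun z' : ℝ => c0 * (x + z') / A) (c0 / A) z := by
    simpa using (((hasDerivAt_id z).const_add x).const_mul c0).div_const A
  have hexp : HasDerivAt (fun z' => Real.exp (c0 * (x + z') / A))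
      (Real.exp (c0 * (x + z) / A) * (c0 / A)) z := harg.exp
  have hdiv : HasDerivAt (fun z' : ℝ => z' / A) (1 / A) z := by
    simpa using (hasDerivAt_id z).div_const A
  have hu1 : HasDerivAt (fun z' => u (x / A) (z' / A) τ)
      (pdY u (x / A) (z / A) τ * (1 / A)) z :=
    (hasDerivAt_uY hC (div_pos hx hA) (div_pos hz hA)).comp (h := fun z' : ℝ => z' / A) z hdiv
  exact (hexp.const_mul K).mul hu1

lemma aux_yy (hC : ContDiffOn ℝ 2 (fun p : ℝ × ℝ × ℝ => u p.1 p.2.1 p.2.2) Omega)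
    (K c0 A τ x : ℝ) (hA : 0 < A) (hx : 0 < x) (y : ℝ) (hy : 0 < y) :
    HasDerivAt (fun z => K * (Real.exp (c0 * (x + z) / A) * (c0 / A)) * u (x / A) (z / A) τ +
          K * Real.exp (c0 * (x + z) / A) * (pdY u (x / A) (z / A) τ * (1 / A)))
      (K * (Real.exp (c0 * (x + y) / A) * (c0 / A) * (c0 / A)) * u (x / A) (y / A) τ +
        K * (Real.exp (c0 * (x + y) / A) * (c0 / A)) * (pdY u (x / A) (y / A) τ * (1 / A)) +
        (K * (Real.exp (c0 * (x + y) / A) * (c0 / A)) * (pdY u (x / A) (y / A) τ * (1 / A)) +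
          K * Real.exp (c0 * (x + y) / A) *
            (pdYY u (x / A) (y / A) τ * (1 / A) * (1 / A)))) y := by
  have harg : HasDerivAt (fun z' : ℝ => c0 * (x + z') / A) (c0 / A) y := by
    simpa using (((hasDerivAt_id y).const_add x).const_mul c0).div_const A
  have hexp : HasDerivAt (fun z' => Real.exp (c0 * (x + z') / A))
      (Real.exp (c0 * (x + y) / A) * (c0 / A)) y := harg.exp
  have hdiv : HasDerivAt (fun z' : ℝ => z' / A) (1 / A) y := by
    simpa using (hasDerivAt_id y).div_const A
  have hu1 : HasDerivAt (fun z' => u (x / A) (z' / A) τ)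
      (pdY u (x / A) (y / A) τ * (1 / A)) y :=
    (hasDerivAt_uY hC (div_pos hx hA) (div_pos hy hA)).comp (h := fun z' : ℝ => z' / A) y hdiv
  have hu2 : HasDerivAt (fun z' => pdY u (x / A) (z' / A) τ)
      (pdYY u (x / A) (y / A) τ * (1 / A)) y :=
    (hasDerivAt_uYY hC (div_pos hx hA) (div_pos hy hA)).comp (h := fun z' : ℝ => z' / A) y hdiv
  have h1 := ((hexp.mul_const (c0 / A)).const_mul K).mul hu1
  have h2 := (hexp.const_mul K).mul (hu2.mul_const (1 / A))
  exact h1.add h2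

set_option maxHeartbeats 4000000 in
/-- Symmetry of the Longstaff–Schwartz equation when `b = e ≠ 0` (subcase 2.2, group `G₁`). -/
theorem ls_symmetry_b_eq_e_G1 (a b d e : ℝ) (hbe : b = e) (hb : b ≠ 0)
    (u : ℝ → ℝ → ℝ → ℝ) (hu : IsLSSolution a b d e u) (ε : ℝ) :
    ∀ x y t : ℝ, 0 < x → 0 < y → 1 + b * ε * Real.exp (b * t) > 0 →
      LSEq a b d e
        (fun x y t =>
          (1 + b * ε * Real.exp (b * t)) ^ (-(2 * (a + d))) *
            Real.exp (2 * b ^ 2 * ε * Real.exp (b * t) * (x + y) /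
              (1 + b * ε * Real.exp (b * t))) *
            u (x / (1 + b * ε * Real.exp (b * t))) (y / (1 + b * ε * Real.exp (b * t)))
              (t - Real.log (1 + b * ε * Real.exp (b * t)) / b))
        x y t := by
  subst hbe
  obtain ⟨hC, hLS⟩ := hu
  intro x y t hx hy hA
  have hAne : (1 + b * ε * Real.exp (b * t)) ≠ 0 := ne_of_gt hA
  have hX : 0 < x / (1 + b * ε * Real.exp (b * t)) := div_pos hx hA
  have hY : 0 < y / (1 + b * ε * Real.exp (b * t)) := div_pos hy hA
  set w : ℝ → ℝ → ℝ → ℝ := fun x y t =>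
      (1 + b * ε * Real.exp (b * t)) ^ (-(2 * (a + d))) *
        Real.exp (2 * b ^ 2 * ε * Real.exp (b * t) * (x + y) /
          (1 + b * ε * Real.exp (b * t))) *
        u (x / (1 + b * ε * Real.exp (b * t))) (y / (1 + b * ε * Real.exp (b * t)))
          (t - Real.log (1 + b * ε * Real.exp (b * t)) / b) with hw
  -- x-derivatives
  have hauxX := aux_x hC ((1 + b * ε * Real.exp (b * t)) ^ (-(2 * (a + d))))
      (2 * b ^ 2 * ε * Real.exp (b * t)) (1 + b * ε * Real.exp (b * t))
      (t - Real.log (1 + b * ε * Real.exp (b * t)) / b) y hA hy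
  have hXw : ∀ z : ℝ, 0 < z → pdX w z y t =
      (1 + b * ε * Real.exp (b * t)) ^ (-(2 * (a + d))) *
          (Real.exp (2 * b ^ 2 * ε * Real.exp (b * t) * (z + y) /
              (1 + b * ε * Real.exp (b * t))) *
            (2 * b ^ 2 * ε * Real.exp (b * t) / (1 + b * ε * Real.exp (b * t)))) *
          u (z / (1 + b * ε * Real.exp (b * t))) (y / (1 + b * ε * Real.exp (b * t)))
            (t - Real.log (1 + b * ε * Real.exp (b * t)) / b) +
        (1 + b * ε * Real.exp (b * t)) ^ (-(2 * (a + d))) *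
          Real.exp (2 * b ^ 2 * ε * Real.exp (b * t) * (z + y) /
            (1 + b * ε * Real.exp (b * t))) *
          (pdX u (z / (1 + b * ε * Real.exp (b * t))) (y / (1 + b * ε * Real.exp (b * t)))
              (t - Real.log (1 + b * ε * Real.exp (b * t)) / b) *
            (1 / (1 + b * ε * Real.exp (b * t)))) := by
    intro z hz
    rw [hw]
    exact (hauxX z hz).deriv
  have hXval := hXw x hx
  have hevX : (fun z : ℝ => pdX w z y t) =ᶠ[nhds x] (fun z : ℝ =>
      (1 + b * ε * Real.exp (b * t)) ^ (-(2 * (a + d))) *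
          (Real.exp (2 * b ^ 2 * ε * Real.exp (b * t) * (z + y) /
              (1 + b * ε * Real.exp (b * t))) *
            (2 * b ^ 2 * ε * Real.exp (b * t) / (1 + b * ε * Real.exp (b * t)))) *
          u (z / (1 + b * ε * Real.exp (b * t))) (y / (1 + b * ε * Real.exp (b * t)))
            (t - Real.log (1 + b * ε * Real.exp (b * t)) / b) +
        (1 + b * ε * Real.exp (b * t)) ^ (-(2 * (a + d))) *
          Real.exp (2 * b ^ 2 * ε * Real.exp (b * t) * (z + y) /
            (1 + b * ε * Real.exp (b * t))) *
          (pdX u (z / (1 + b * ε * Real.exp (b * t))) (y / (1 + b * ε * Real.exp (b * t)))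
              (t - Real.log (1 + b * ε * Real.exp (b * t)) / b) *
            (1 / (1 + b * ε * Real.exp (b * t))))) := by
    filter_upwards [eventually_gt_nhds hx] with z hz using hXw z hz
  have hXXd := (aux_xx hC ((1 + b * ε * Real.exp (b * t)) ^ (-(2 * (a + d))))
      (2 * b ^ 2 * ε * Real.exp (b * t)) (1 + b * ε * Real.exp (b * t))
      (t - Real.log (1 + b * ε * Real.exp (b * t)) / b) y hA hy x hx).congr_of_eventuallyEq hevX
  have hXXval : pdXX w x y t = _ := hXXd.deriv
  -- y-derivatives
  have hauxY := aux_y hC ((1 + b * ε * Real.exp (b * t)) ^ (-(2 * (a + d))))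
      (2 * b ^ 2 * ε * Real.exp (b * t)) (1 + b * ε * Real.exp (b * t))
      (t - Real.log (1 + b * ε * Real.exp (b * t)) / b) x hA hx
  have hYw : ∀ z : ℝ, 0 < z → pdY w x z t =
      (1 + b * ε * Real.exp (b * t)) ^ (-(2 * (a + d))) *
          (Real.exp (2 * b ^ 2 * ε * Real.exp (b * t) * (x + z) /
              (1 + b * ε * Real.exp (b * t))) *
            (2 * b ^ 2 * ε * Real.exp (b * t) / (1 + b * ε * Real.exp (b * t)))) *
          u (x / (1 + b * ε * Real.exp (b * t))) (z / (1 + b * ε * Real.exp (b * t)))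
            (t - Real.log (1 + b * ε * Real.exp (b * t)) / b) +
        (1 + b * ε * Real.exp (b * t)) ^ (-(2 * (a + d))) *
          Real.exp (2 * b ^ 2 * ε * Real.exp (b * t) * (x + z) /
            (1 + b * ε * Real.exp (b * t))) *
          (pdY u (x / (1 + b * ε * Real.exp (b * t))) (z / (1 + b * ε * Real.exp (b * t)))
              (t - Real.log (1 + b * ε * Real.exp (b * t)) / b) *
            (1 / (1 + b * ε * Real.exp (b * t)))) := by
    intro z hz
    rw [hw]
    exact (hauxY z hz).deriv
  have hYval := hYw y hy
  have hevY : (fun z : ℝ => pdY w x z t) =ᶠ[nhds y] (fun z : ℝ =>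
      (1 + b * ε * Real.exp (b * t)) ^ (-(2 * (a + d))) *
          (Real.exp (2 * b ^ 2 * ε * Real.exp (b * t) * (x + z) /
              (1 + b * ε * Real.exp (b * t))) *
            (2 * b ^ 2 * ε * Real.exp (b * t) / (1 + b * ε * Real.exp (b * t)))) *
          u (x / (1 + b * ε * Real.exp (b * t))) (z / (1 + b * ε * Real.exp (b * t)))
            (t - Real.log (1 + b * ε * Real.exp (b * t)) / b) +
        (1 + b * ε * Real.exp (b * t)) ^ (-(2 * (a + d))) *
          Real.exp (2 * b ^ 2 * ε * Real.exp (b * t) * (x + z) /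
            (1 + b * ε * Real.exp (b * t))) *
          (pdY u (x / (1 + b * ε * Real.exp (b * t))) (z / (1 + b * ε * Real.exp (b * t)))
              (t - Real.log (1 + b * ε * Real.exp (b * t)) / b) *
            (1 / (1 + b * ε * Real.exp (b * t))))) := by
    filter_upwards [eventually_gt_nhds hy] with z hz using hYw z hz
  have hYYd := (aux_yy hC ((1 + b * ε * Real.exp (b * t)) ^ (-(2 * (a + d))))
      (2 * b ^ 2 * ε * Real.exp (b * t)) (1 + b * ε * Real.exp (b * t))
      (t - Real.log (1 + b * ε * Real.exp (b * t)) / b) x hA hx y hy).congr_of_eventuallyEq hevY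
  have hYYval : pdYY w x y t = _ := hYYd.deriv
  -- t-derivative
  have hbt : HasDerivAt (fun s : ℝ => b * s) b t := by
    simpa using (hasDerivAt_id t).const_mul b
  have hexp_bt : HasDerivAt (fun s => Real.exp (b * s)) (Real.exp (b * t) * b) t := hbt.exp
  have hAs : HasDerivAt (fun s => 1 + b * ε * Real.exp (b * s))
      (b * ε * (Real.exp (b * t) * b)) t := (hexp_bt.const_mul (b * ε)).const_add 1
  have hK' : HasDerivAt (fun s => (1 + b * ε * Real.exp (b * s)) ^ (-(2 * (a + d))))
      (b * ε * (Real.exp (b * t) * b) * (-(2 * (a + d))) *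
        (1 + b * ε * Real.exp (b * t)) ^ (-(2 * (a + d)) - 1)) t :=
    hAs.rpow_const (Or.inl hAne)
  have hNum : HasDerivAt (fun s => 2 * b ^ 2 * ε * Real.exp (b * s) * (x + y))
      (2 * b ^ 2 * ε * (Real.exp (b * t) * b) * (x + y)) t :=
    (hexp_bt.const_mul (2 * b ^ 2 * ε)).mul_const (x + y)
  have hArg : HasDerivAt
      (fun s => 2 * b ^ 2 * ε * Real.exp (b * s) * (x + y) / (1 + b * ε * Real.exp (b * s)))
      ((2 * b ^ 2 * ε * (Real.exp (b * t) * b) * (x + y) * (1 + b * ε * Real.exp (b * t)) -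
          2 * b ^ 2 * ε * Real.exp (b * t) * (x + y) * (b * ε * (Real.exp (b * t) * b))) /
        (1 + b * ε * Real.exp (b * t)) ^ 2) t := hNum.div hAs hAne
  have hE' : HasDerivAt
      (fun s => Real.exp (2 * b ^ 2 * ε * Real.exp (b * s) * (x + y) /
        (1 + b * ε * Real.exp (b * s))))
      (Real.exp (2 * b ^ 2 * ε * Real.exp (b * t) * (x + y) / (1 + b * ε * Real.exp (b * t))) *
        ((2 * b ^ 2 * ε * (Real.exp (b * t) * b) * (x + y) * (1 + b * ε * Real.exp (b * t)) -
            2 * b ^ 2 * ε * Real.exp (b * t) * (x + y) * (b * ε * (Real.exp (b * t) * b))) /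
          (1 + b * ε * Real.exp (b * t)) ^ 2)) t := hArg.exp
  have hτ' : HasDerivAt (fun s => s - Real.log (1 + b * ε * Real.exp (b * s)) / b)
      (1 - b * ε * (Real.exp (b * t) * b) / (1 + b * ε * Real.exp (b * t)) / b) t :=
    (hasDerivAt_id t).sub ((hAs.log hAne).div_const b)
  have hxc : HasDerivAt (fun s => x / (1 + b * ε * Real.exp (b * s)))
      ((0 * (1 + b * ε * Real.exp (b * t)) - x * (b * ε * (Real.exp (b * t) * b))) /
        (1 + b * ε * Real.exp (b * t)) ^ 2) t := (hasDerivAt_const t x).div hAs hAne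
  have hyc : HasDerivAt (fun s => y / (1 + b * ε * Real.exp (b * s)))
      ((0 * (1 + b * ε * Real.exp (b * t)) - y * (b * ε * (Real.exp (b * t) * b))) /
        (1 + b * ε * Real.exp (b * t)) ^ 2) t := (hasDerivAt_const t y).div hAs hAne
  have hγ : HasDerivAt (fun s : ℝ =>
      ((x / (1 + b * ε * Real.exp (b * s)), y / (1 + b * ε * Real.exp (b * s)),
        s - Real.log (1 + b * ε * Real.exp (b * s)) / b) : ℝ × ℝ × ℝ))
      (((0 * (1 + b * ε * Real.exp (b * t)) - x * (b * ε * (Real.exp (b * t) * b))) /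
          (1 + b * ε * Real.exp (b * t)) ^ 2,
        (0 * (1 + b * ε * Real.exp (b * t)) - y * (b * ε * (Real.exp (b * t) * b))) /
          (1 + b * ε * Real.exp (b * t)) ^ 2,
        1 - b * ε * (Real.exp (b * t) * b) / (1 + b * ε * Real.exp (b * t)) / b)) t :=
    hxc.prodMk (hyc.prodMk hτ')
  have hUc : HasDerivAt (fun s => u (x / (1 + b * ε * Real.exp (b * s)))
      (y / (1 + b * ε * Real.exp (b * s))) (s - Real.log (1 + b * ε * Real.exp (b * s)) / b))
      (fderiv ℝ (fun p : ℝ × ℝ × ℝ => u p.1 p.2.1 p.2.2)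
        (x / (1 + b * ε * Real.exp (b * t)), y / (1 + b * ε * Real.exp (b * t)),
          t - Real.log (1 + b * ε * Real.exp (b * t)) / b)
        ((0 * (1 + b * ε * Real.exp (b * t)) - x * (b * ε * (Real.exp (b * t) * b))) /
            (1 + b * ε * Real.exp (b * t)) ^ 2,
          (0 * (1 + b * ε * Real.exp (b * t)) - y * (b * ε * (Real.exp (b * t) * b))) /
            (1 + b * ε * Real.exp (b * t)) ^ 2,
          1 - b * ε * (Real.exp (b * t) * b) / (1 + b * ε * Real.exp (b * t)) / b)) t :=
    (hFD hC hX hY).comp_hasDerivAt (f := fun s : ℝ =>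
      ((x / (1 + b * ε * Real.exp (b * s)), y / (1 + b * ε * Real.exp (b * s)),
        s - Real.log (1 + b * ε * Real.exp (b * s)) / b) : ℝ × ℝ × ℝ)) t hγ
  have hLv : fderiv ℝ (fun p : ℝ × ℝ × ℝ => u p.1 p.2.1 p.2.2)
      (x / (1 + b * ε * Real.exp (b * t)), y / (1 + b * ε * Real.exp (b * t)),
        t - Real.log (1 + b * ε * Real.exp (b * t)) / b)
      ((0 * (1 + b * ε * Real.exp (b * t)) - x * (b * ε * (Real.exp (b * t) * b))) /
          (1 + b * ε * Real.exp (b * t)) ^ 2,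
        (0 * (1 + b * ε * Real.exp (b * t)) - y * (b * ε * (Real.exp (b * t) * b))) /
          (1 + b * ε * Real.exp (b * t)) ^ 2,
        1 - b * ε * (Real.exp (b * t) * b) / (1 + b * ε * Real.exp (b * t)) / b) =
      ((0 * (1 + b * ε * Real.exp (b * t)) - x * (b * ε * (Real.exp (b * t) * b))) /
          (1 + b * ε * Real.exp (b * t)) ^ 2) *
        pdX u (x / (1 + b * ε * Real.exp (b * t))) (y / (1 + b * ε * Real.exp (b * t)))
          (t - Real.log (1 + b * ε * Real.exp (b * t)) / b) +
      ((0 * (1 + b * ε * Real.exp (b * t)) - y * (b * ε * (Real.exp (b * t) * b))) /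
          (1 + b * ε * Real.exp (b * t)) ^ 2) *
        pdY u (x / (1 + b * ε * Real.exp (b * t))) (y / (1 + b * ε * Real.exp (b * t)))
          (t - Real.log (1 + b * ε * Real.exp (b * t)) / b) +
      (1 - b * ε * (Real.exp (b * t) * b) / (1 + b * ε * Real.exp (b * t)) / b) *
        pdT u (x / (1 + b * ε * Real.exp (b * t))) (y / (1 + b * ε * Real.exp (b * t)))
          (t - Real.log (1 + b * ε * Real.exp (b * t)) / b) := by
    have hv : (((0 * (1 + b * ε * Real.exp (b * t)) - x * (b * ε * (Real.exp (b * t) * b))) /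
          (1 + b * ε * Real.exp (b * t)) ^ 2,
        (0 * (1 + b * ε * Real.exp (b * t)) - y * (b * ε * (Real.exp (b * t) * b))) /
          (1 + b * ε * Real.exp (b * t)) ^ 2,
        1 - b * ε * (Real.exp (b * t) * b) / (1 + b * ε * Real.exp (b * t)) / b) : ℝ × ℝ × ℝ) =
        ((0 * (1 + b * ε * Real.exp (b * t)) - x * (b * ε * (Real.exp (b * t) * b))) /
          (1 + b * ε * Real.exp (b * t)) ^ 2) • ((1 : ℝ), (0 : ℝ), (0 : ℝ)) +
        ((0 * (1 + b * ε * Real.exp (b * t)) - y * (b * ε * (Real.exp (b * t) * b))) /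
          (1 + b * ε * Real.exp (b * t)) ^ 2) • ((0 : ℝ), (1 : ℝ), (0 : ℝ)) +
        (1 - b * ε * (Real.exp (b * t) * b) / (1 + b * ε * Real.exp (b * t)) / b) •
          ((0 : ℝ), (0 : ℝ), (1 : ℝ)) := by
      simp [Prod.ext_iff]
    rw [hv, map_add, map_add, map_smul, map_smul, map_smul,
      ← pdX_eq hC hX hY, ← pdY_eq hC hX hY, ← pdT_eq hC hX hY,
      smul_eq_mul, smul_eq_mul, smul_eq_mul]
  have hTd := (hK'.mul hE').mul hUc
  rw [hLv] at hTd
  simp only [Pi.mul_apply] at hTd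
  have hTval : pdT w x y t = _ := hTd.deriv
  have hut := hLS (x / (1 + b * ε * Real.exp (b * t))) (y / (1 + b * ε * Real.exp (b * t)))
      (t - Real.log (1 + b * ε * Real.exp (b * t)) / b) hX hY
  unfold LSEq at hut
  rw [hut] at hTval
  unfold LSEq
  rw [hTval, hXval, hYval, hXXval, hYYval, Real.rpow_sub_one hAne]
  field_simp
  ring
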